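/- The k-linear map w̃ : 𝔥 → 𝔥 determined by w̃(α∨) = (wα)∨ for α ∈ Φ and w̃(X_{α̃}) = X_{w(α̃)} for α̃ ∈ Φ̃ is a Lie algebra automorphism of 𝔥, and it has order d. -/

import Mathlib

noncomputable section

/-- The coroot `α∨ ∈ Hom(Λ, k)`, `α∨(β) = (α, β)`. -/
def corootHom (k : Type*) [Field k] {Λ : Type*} [AddCommGroup Λ]
    (B : Λ →+ Λ →+ ℤ) (α : Λ) : Λ →+ k :=
  (Int.castAddHom k).comp (B α)

/-- The subgroup `(1-w)Λ` of a lattice `Λ` with automorphism `w`. -/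
def coinvSub {Λ : Type*} [AddCommGroup Λ] (w : AddAut Λ) : AddSubgroup Λ :=
  AddSubgroup.closure {y | ∃ x : Λ, y = x - w x}

lemma coroot_span_top (k : Type*) [Field k] [CharZero k]
    (Λ : Type*) [AddCommGroup Λ] [Module.Free ℤ Λ] [Module.Finite ℤ Λ]
    (B : Λ →+ Λ →+ ℤ) (hBpos : ∀ a : Λ, a ≠ 0 → 0 < B a a) :
    Submodule.span k (Set.range (corootHom k B)) = ⊤ := by
  classical
  set ι := Module.Free.ChooseBasisIndex ℤ Λ
  set bΛ : Module.Basis ι ℤ Λ := Module.Free.chooseBasis ℤ Λ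
  set G : Matrix ι ι ℤ := Matrix.of fun i j => B (bΛ i) (bΛ j) with hG
  have hdet : G.det ≠ 0 := by
    intro h
    obtain ⟨v, hv0, hGv⟩ := Matrix.exists_mulVec_eq_zero_iff.2 h
    set a : Λ := ∑ i, v i • bΛ i with ha
    have hane : a ≠ 0 := by
      intro h0
      apply hv0
      have h2 : bΛ.equivFun.symm v = bΛ.equivFun.symm 0 := by
        rw [Module.Basis.equivFun_symm_apply, map_zero, ← ha, h0]
      exact bΛ.equivFun.symm.injective h2
    have inner : ∀ i, (B (bΛ i)) a = ∑ j, v j * G i j := by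
      intro i
      rw [ha, map_sum]
      refine Finset.sum_congr rfl fun j _ => ?_
      rw [map_zsmul, smul_eq_mul]
      rfl
    have houter : B a = ∑ i, v i • B (bΛ i) := by
      rw [ha, map_sum]
      exact Finset.sum_congr rfl fun i _ => map_zsmul B (v i) (bΛ i)
    have hBaa : (B a) a = 0 := by
      have expand : (B a) a = ∑ i, v i * ((B (bΛ i)) a) := by
        conv_lhs => rw [houter]
        rw [AddMonoidHom.finset_sum_apply]
        exact Finset.sum_congr rfl fun i _ => by simp
      rw [expand]
      refine Finset.sum_eq_zero fun i _ => ?_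
      have hz : ∑ j, v j * G i j = 0 := by
        have := congrFun hGv i
        simpa [Matrix.mulVec, dotProduct, mul_comm] using this
      rw [inner i, hz, mul_zero]
    have := hBpos a hane
    omega
  set Gk : Matrix ι ι k := G.map ⇑(Int.castRingHom k) with hGk
  have hGkdet : Gk.det ≠ 0 := by
    rw [hGk, ← RingHom.mapMatrix_apply, ← RingHom.map_det]
    simpa using hdet
  have hGkunit : IsUnit Gk := (Matrix.isUnit_iff_isUnit_det Gk).2 (isUnit_iff_ne_zero.2 hGkdet)
  rw [eq_top_iff]
  rintro f -
  obtain ⟨t, ht⟩ := (Matrix.vecMul_surjective_iff_isUnit.2 hGkunit) (fun i => f (bΛ i))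
  have hf : f = ∑ i, t i • corootHom k B (bΛ i) := by
    have hbasis : ∀ j, f (bΛ j) = (∑ i, t i • corootHom k B (bΛ i)) (bΛ j) := by
      intro j
      rw [AddMonoidHom.finset_sum_apply]
      have := congrFun ht j
      simp only [Matrix.vecMul, dotProduct, hGk, hG, Matrix.map_apply, Matrix.of_apply,
        Int.coe_castRingHom] at this
      rw [← this]
      refine Finset.sum_congr rfl fun i _ => ?_
      simp [corootHom]
    ext lam
    have hmem : lam ∈ Submodule.span ℤ (Set.range bΛ) := by
      rw [bΛ.span_eq]; trivial
    induction hmem using Submodule.span_induction with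
    | mem x hx => obtain ⟨j, rfl⟩ := hx; exact hbasis j
    | zero => simp
    | add x y hx hy ihx ihy => simp [map_add, ihx, ihy]
    | smul n x hx ih => rw [map_zsmul, map_zsmul, ih]
  rw [hf]
  exact Submodule.sum_smul_mem _ _ fun i _ => Submodule.subset_span ⟨bΛ i, rfl⟩

/-- **Proposition 2.4.** The map `w̃` determined by `w̃(α∨) = (wα)∨` and
`w̃(X_α̃) = X_{w(α̃)}` is a Lie algebra automorphism of `𝔥`, of order `d`. -/
theorem lift_of_w_is_Lie_algebra_automorphism_of_order_d
    (k : Type*) [Field k] [CharZero k]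
    (d : ℕ) (hd : 0 < d) (ζ : k) (hζ : IsPrimitiveRoot ζ d)
    -- the simply laced root lattice Λ with elliptic automorphism w of order d
    (Λ : Type*) [AddCommGroup Λ] [Module.Free ℤ Λ] [Module.Finite ℤ Λ]
    (B : Λ →+ Λ →+ ℤ)
    (hBsymm : ∀ a b : Λ, B a b = B b a)
    (hBpos : ∀ a : Λ, a ≠ 0 → 0 < B a a)
    (hBgen : AddSubgroup.closure {a : Λ | B a a = 2} = ⊤)
    (w : AddAut Λ) (hwB : ∀ a b : Λ, B (w a) (w b) = B a b)
    (hword : addOrderOf w = d)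
    (hell : Finite (Λ ⧸ coinvSub w))
    -- the central extension Λ̃ of Λ by ⟨ζ⟩ (pulled back from ℋ over the coinvariants)
    (Lt : Type*) [Group Lt]
    (z : Lt) (hzc : z ∈ Subgroup.center Lt) (hzord : orderOf z = d)
    (pr : Lt → Λ) (hpr : ∀ a b : Lt, pr (a * b) = pr a + pr b)
    (hprs : Function.Surjective pr)
    (hker : ∀ a : Lt, pr a = 0 ↔ ∃ i : ℤ, a = z ^ i)
    (hfac : ∀ a b c : Lt, pr a - pr b ∈ coinvSub w →
      a * c * a⁻¹ * c⁻¹ = b * c * b⁻¹ * c⁻¹)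
    -- the biadditive pairing ε, making (Λ, w, ℋ, ε) an input datum
    (ε : Λ → Λ → kˣ)
    (hεadd₁ : ∀ a b c : Λ, ε (a + b) c = ε a c * ε b c)
    (hεadd₂ : ∀ a b c : Λ, ε a (b + c) = ε a b * ε a c)
    (hεcomm : ∀ a b : Lt, B (pr a) (pr a) = 2 → B (pr b) (pr b) = 2 →
      B (pr a) (pr b) = -1 → ∀ i : ℤ, b * a * b⁻¹ * a⁻¹ = z ^ i →
      ((ε (pr a) (pr b) : k) / ((ε (pr b) (pr a) : k))) = -(ζ ^ i))
    (hεw : ∀ a b : Λ, ε (w a) (w b) = ε a b)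
    -- the underlying vector space 𝔥 = 𝔱 ⊕ 𝔩
    (H : Type*) [AddCommGroup H] [Module k H]
    (tEmb : (Λ →+ k) →ₗ[k] H) (htinj : Function.Injective tEmb)
    (X : Lt → H)
    (hXζ : ∀ a : Lt, B (pr a) (pr a) = 2 → X (z * a) = ζ • X a)
    (sec : Λ → Lt) (hsec : ∀ α : Λ, pr (sec α) = α)
    (hXind : LinearIndependent k (fun α : {α : Λ // B α α = 2} => X (sec α)))
    (hspan : Submodule.span k
      (Set.range ⇑tEmb ∪ X '' {a : Lt | B (pr a) (pr a) = 2}) = ⊤)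
    (hdisj : Disjoint (LinearMap.range tEmb)
      (Submodule.span k (X '' {a : Lt | B (pr a) (pr a) = 2})))
    -- the bracket of the construction
    (br : H →ₗ[k] H →ₗ[k] H)
    (hbr_tt : ∀ f g : Λ →+ k, br (tEmb f) (tEmb g) = 0)
    (hbr_tX : ∀ (α : Λ) (a : Lt), B α α = 2 → B (pr a) (pr a) = 2 →
      br (tEmb (corootHom k B α)) (X a) = ((B α (pr a) : k)) • X a)
    (hbr_Xt : ∀ (α : Λ) (a : Lt), B α α = 2 → B (pr a) (pr a) = 2 →
      br (X a) (tEmb (corootHom k B α)) = (-(B α (pr a) : k)) • X a)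
    (hbr_XX₀ : ∀ a b : Lt, B (pr a) (pr a) = 2 → B (pr b) (pr b) = 2 →
      pr a + pr b = 0 → ∀ i : ℤ, a * b = z ^ i →
      br (X a) (X b) = (((ε (pr a) (pr b) : k)) * ζ ^ i) • tEmb (corootHom k B (pr a)))
    (hbr_XXΦ : ∀ a b : Lt, B (pr a) (pr a) = 2 → B (pr b) (pr b) = 2 →
      B (pr a + pr b) (pr a + pr b) = 2 →
      br (X a) (X b) = ((ε (pr a) (pr b) : k)) • X (a * b))
    (hbr_XXo : ∀ a b : Lt, B (pr a) (pr a) = 2 → B (pr b) (pr b) = 2 →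
      pr a + pr b ≠ 0 → B (pr a + pr b) (pr a + pr b) ≠ 2 →
      br (X a) (X b) = 0)
    -- the lift of w to Λ̃ (acting as w on Λ and trivially on ℋ)
    (wt : MulAut Lt) (hwtpr : ∀ a : Lt, pr (wt a) = w (pr a))
    (hwtz : wt z = z) (hwtd : wt ^ d = 1)
    :
    ∃ e : H ≃ₗ[k] H,
      (∀ α : Λ, B α α = 2 →
        e (tEmb (corootHom k B α)) = tEmb (corootHom k B (w α))) ∧
      (∀ a : Lt, B (pr a) (pr a) = 2 → e (X a) = X (wt a)) ∧
      (∀ x y : H, e (br x y) = br (e x) (e y)) ∧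
      orderOf e = d := by
  classical
  -- basic facts about `pr` and `z`
  have pr_one : pr (1 : Lt) = 0 := by
    have h := hpr 1 1
    rw [mul_one] at h
    exact (left_eq_add.mp h)
  have pr_inv : ∀ a : Lt, pr a⁻¹ = - pr a := by
    intro a
    have h := hpr a a⁻¹
    rw [mul_inv_cancel, pr_one] at h
    exact eq_neg_of_add_eq_zero_right h.symm
  have pr_zpow : ∀ n : ℕ, pr (z ^ n) = 0 := by
    intro n
    exact (hker _).2 ⟨n, by rw [zpow_natCast]⟩
  have hzd : z ^ d = 1 := by rw [← hzord]; exact pow_orderOf_eq_one z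
  have hwd : d • w = 0 := by rw [← hword]; exact addOrderOf_nsmul_eq_zero w
  -- invariance of B under powers of w
  have hwB_pow : ∀ (n : ℕ) (a b : Λ), B ((n • w) a) ((n • w) b) = B a b := by
    intro n
    induction n with
    | zero => intro a b; simp
    | succ n ih =>
      intro a b
      have h1 : ∀ c : Λ, ((n + 1) • w) c = (n • w) (w c) := by
        intro c; rw [succ_nsmul]; rfl
      rw [h1, h1, ih, hwB]
  have root_w : ∀ α : Λ, B α α = 2 → B (w α) (w α) = 2 := fun α h => by
    rw [hwB]; exact h
  have root_wt : ∀ a : Lt, B (pr a) (pr a) = 2 → B (pr (wt a)) (pr (wt a)) = 2 := fun a h => by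
    rw [hwtpr, hwB]; exact h
  -- scaling of the X's by powers of z
  have Xpow : ∀ (n : ℕ) (a : Lt), B (pr a) (pr a) = 2 → X (z ^ n * a) = ζ ^ n • X a := by
    intro n
    induction n with
    | zero => intro a _; simp
    | succ n ih =>
      intro a ha
      have h1 : z ^ (n + 1) * a = z * (z ^ n * a) := by
        rw [pow_succ', mul_assoc]
      have h2 : pr (z ^ n * a) = pr a := by rw [hpr, pr_zpow, zero_add]
      rw [h1, hXζ _ (by rw [h2]; exact ha), ih a ha, smul_smul, pow_succ']
  have rep : ∀ a : Lt, B (pr a) (pr a) = 2 → ∃ n : ℕ, a = z ^ n * sec (pr a) := by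
    intro a ha
    have h0 : pr (a * (sec (pr a))⁻¹) = 0 := by
      rw [hpr, pr_inv, hsec, add_neg_cancel]
    obtain ⟨i, hi⟩ := (hker _).1 h0
    refine ⟨(i % (d : ℤ)).toNat, ?_⟩
    have hz' : z ^ (i % (d : ℤ)) = z ^ i := by
      have := zpow_mod_orderOf z i
      rwa [hzord] at this
    have hnn : (0 : ℤ) ≤ i % (d : ℤ) := Int.emod_nonneg i (by exact_mod_cast hd.ne')
    have hzn : z ^ ((i % (d : ℤ)).toNat) = z ^ i := by
      rw [← hz', ← zpow_natCast, Int.toNat_of_nonneg hnn]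
    calc a = (a * (sec (pr a))⁻¹) * sec (pr a) := by group
    _ = z ^ i * sec (pr a) := by rw [hi]
    _ = _ := by rw [← hzn]
  -- injectivity of the coroot map
  have cinj : ∀ μ ν : Λ, corootHom k B μ = corootHom k B ν → μ = ν := by
    intro μ ν h
    have hB : ∀ β : Λ, B μ β = B ν β := by
      intro β
      have h2 := DFunLike.congr_fun h β
      simp only [corootHom, AddMonoidHom.coe_comp, Function.comp_apply,
        Int.coe_castAddHom] at h2
      exact_mod_cast h2
    by_contra hne
    have hδ : μ - ν ≠ 0 := sub_ne_zero.2 hne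
    have hz0 : B (μ - ν) (μ - ν) = 0 := by
      rw [map_sub]
      simp [AddMonoidHom.sub_apply, hB]
    have := hBpos _ hδ
    omega
  -- the two complementary submodules
  set T : Submodule k H := LinearMap.range tEmb with hT
  set rootsLt : Set Lt := {a : Lt | B (pr a) (pr a) = 2} with hrootsLt
  set Lsub : Submodule k H := Submodule.span k (X '' rootsLt) with hLsub
  have hcodis : T ⊔ Lsub = ⊤ := by
    rw [← hspan, Submodule.span_union]
    congr 1
    rw [← LinearMap.coe_range, Submodule.span_eq]
  have hcompl : IsCompl T Lsub := ⟨hdisj, codisjoint_iff.2 hcodis⟩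
  -- the basis of Lsub given by the linearly independent X (sec α)
  have hvspan : Submodule.span k
      (Set.range fun α : {α : Λ // B α α = 2} => X (sec ↑α)) = Lsub := by
    apply le_antisymm
    · rw [Submodule.span_le]
      rintro _ ⟨α, rfl⟩
      exact Submodule.subset_span ⟨sec ↑α, by simp [hrootsLt, hsec, α.2], rfl⟩
    · rw [Submodule.span_le]
      rintro _ ⟨a, ha, rfl⟩
      obtain ⟨n, hn⟩ := rep a ha
      have hX : X a = ζ ^ n • X (sec (pr a)) := by
        have h' := Xpow n (sec (pr a)) (by rw [hsec]; exact ha)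
        rw [← hn] at h'
        exact h'
      rw [hX]
      exact Submodule.smul_mem _ _
        (Submodule.subset_span ⟨⟨pr a, ha⟩, rfl⟩)
  set bL : Module.Basis {α : Λ // B α α = 2} k Lsub :=
    (Module.Basis.span hXind).map (LinearEquiv.ofEq _ _ hvspan) with hbL
  have bL_coe : ∀ α : {α : Λ // B α α = 2}, (bL α : H) = X (sec ↑α) := by
    intro α
    simp only [hbL, Module.Basis.map_apply]
    have h1 : ((LinearEquiv.ofEq _ _ hvspan) ((Module.Basis.span hXind) α) : H)
        = (((Module.Basis.span hXind) α : _) : H) := rfl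
    rw [h1, Module.Basis.span_apply]
  -- the map on the torus part
  set σ : Λ →+ Λ := AddMonoidHom.mk' (fun lam => (-w) lam) (fun a b => map_add (-w) a b) with hσ
  set Tmap : (Λ →+ k) →ₗ[k] (Λ →+ k) :=
    { toFun := fun f => f.comp σ
      map_add' := fun f g => AddMonoidHom.add_comp f g σ
      map_smul' := fun r f => by ext lam; simp } with hTmap
  set projT : H →ₗ[k] T := Submodule.projectionOnto T Lsub hcompl with hprojT
  set projL : H →ₗ[k] Lsub := Submodule.projectionOnto Lsub T hcompl.symm with hprojL
  set eT : (Λ →+ k) ≃ₗ[k] T := LinearEquiv.ofInjective tEmb htinj with heT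
  set cstr : Lsub →ₗ[k] H := Module.Basis.constr bL k
    (fun α : {α : Λ // B α α = 2} => X (wt (sec ↑α))) with hcstr
  set E : H →ₗ[k] H :=
    (tEmb ∘ₗ (Tmap ∘ₗ ((eT.symm : T →ₗ[k] (Λ →+ k)) ∘ₗ projT))) + (cstr ∘ₗ projL) with hE
  -- computation of E on the torus part
  have ET : ∀ f : Λ →+ k, E (tEmb f) = tEmb (f.comp σ) := by
    intro f
    have hmemT : tEmb f ∈ T := ⟨f, rfl⟩
    have h1 : projT (tEmb f) = eT f := by
      have hco : tEmb f = ((eT f : T) : H) := by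
        rw [heT]; rfl
      rw [hco, hprojT, Submodule.linearProjOfIsCompl_apply_left hcompl (eT f)]
    have h2 : projL (tEmb f) = 0 :=
      Submodule.projectionOnto_apply_of_mem_right hcompl.symm hmemT
    simp only [hE, LinearMap.add_apply, LinearMap.comp_apply, h1, h2, map_zero,
      LinearEquiv.coe_coe, LinearEquiv.symm_apply_apply, add_zero]
    rfl
  have Ecoroot : ∀ α : Λ, B α α = 2 →
      E (tEmb (corootHom k B α)) = tEmb (corootHom k B (w α)) := by
    intro α hα
    rw [ET]
    congr 1
    ext β
    simp only [corootHom, AddMonoidHom.coe_comp, Function.comp_apply, Int.coe_castAddHom, hσ,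
      AddMonoidHom.mk'_apply]
    congr 1
    have hβ : β = w ((-w) β) := by
      simp
    conv_rhs => rw [hβ, hwB]
  -- computation of E on the X part
  have EX0 : ∀ α : Λ, B α α = 2 → E (X (sec α)) = X (wt (sec α)) := by
    intro α hα
    have hmem : X (sec α) ∈ Lsub :=
      Submodule.subset_span ⟨sec α, by simp [hrootsLt, hsec, hα], rfl⟩
    have h1 : projT (X (sec α)) = 0 :=
      Submodule.projectionOnto_apply_of_mem_right hcompl hmem
    have h2 : projL (X (sec α)) = bL ⟨α, hα⟩ := by
      have : (⟨X (sec α), hmem⟩ : Lsub) = bL ⟨α, hα⟩ :=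
        Subtype.ext (bL_coe ⟨α, hα⟩).symm
      rw [← this, hprojL]
      exact Submodule.linearProjOfIsCompl_apply_left hcompl.symm ⟨X (sec α), hmem⟩
    simp only [hE, LinearMap.add_apply, LinearMap.comp_apply, h1, h2, map_zero, zero_add]
    rw [hcstr, Module.Basis.constr_basis]
  have EX : ∀ a : Lt, B (pr a) (pr a) = 2 → E (X a) = X (wt a) := by
    intro a ha
    obtain ⟨n, hn⟩ := rep a ha
    have hsecroot : B (pr (sec (pr a))) (pr (sec (pr a))) = 2 := by
      rw [hsec]; exact ha
    have hwtsecroot : B (pr (wt (sec (pr a)))) (pr (wt (sec (pr a)))) = 2 :=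
      root_wt _ hsecroot
    calc E (X a) = ζ ^ n • E (X (sec (pr a))) := by
          have hX : X a = ζ ^ n • X (sec (pr a)) := by
            have h' := Xpow n (sec (pr a)) hsecroot
            rw [← hn] at h'
            exact h'
          rw [hX, map_smul]
    _ = ζ ^ n • X (wt (sec (pr a))) := by rw [EX0 (pr a) ha]
    _ = X (z ^ n * wt (sec (pr a))) := (Xpow n _ hwtsecroot).symm
    _ = X (wt a) := by
          have hwa : wt a = z ^ n * wt (sec (pr a)) := by
            conv_lhs => rw [hn]
            rw [map_mul, map_pow, hwtz]
          rw [hwa]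
  -- the coroot span
  have cadd : ∀ x y : Λ, corootHom k B (x + y) = corootHom k B x + corootHom k B y := by
    intro x y; ext β; simp [corootHom]
  have cneg : ∀ x : Λ, corootHom k B (-x) = - corootHom k B x := by
    intro x; ext β; simp [corootHom]
  have czero : corootHom k B 0 = 0 := by
    ext β; simp [corootHom]
  have hcspan : ∀ lam : Λ, corootHom k B lam ∈
      Submodule.span k (corootHom k B '' {α : Λ | B α α = 2}) := by
    intro lam
    have hlam : lam ∈ AddSubgroup.closure {α : Λ | B α α = 2} := by
      rw [hBgen]; trivial
    induction hlam using AddSubgroup.closure_induction with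
    | mem x hx => exact Submodule.subset_span ⟨x, hx, rfl⟩
    | zero => rw [czero]; exact Submodule.zero_mem _
    | add x y hx hy ihx ihy => rw [cadd]; exact Submodule.add_mem _ ihx ihy
    | neg x hx ih => rw [cneg]; exact Submodule.neg_mem _ ih
  have hcr : Submodule.span k (corootHom k B '' {α : Λ | B α α = 2}) = ⊤ := by
    rw [eq_top_iff, ← coroot_span_top k Λ B hBpos]
    refine Submodule.span_le.2 ?_
    rintro _ ⟨lam, rfl⟩
    exact hcspan lam
  -- the spanning set consisting of coroot vectors and X's
  set Sset : Set H := (tEmb '' (corootHom k B '' {α : Λ | B α α = 2})) ∪ (X '' rootsLt)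
    with hSset
  have hS : Submodule.span k Sset = ⊤ := by
    rw [eq_top_iff, ← hspan]
    refine Submodule.span_le.2 ?_
    rintro x (⟨f, rfl⟩ | hx)
    · have hf : f ∈ Submodule.span k (corootHom k B '' {α : Λ | B α α = 2}) := by
        rw [hcr]; trivial
      have : tEmb f ∈ Submodule.span k (tEmb '' (corootHom k B '' {α : Λ | B α α = 2})) := by
        rw [Submodule.span_image]
        exact Submodule.mem_map_of_mem hf
      exact Submodule.span_mono Set.subset_union_left this
    · exact Submodule.subset_span (Set.subset_union_right hx)
  -- equivariance of the bracket on the generators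
  have base : ∀ x ∈ Sset, ∀ y ∈ Sset, E (br x y) = br (E x) (E y) := by
    rintro x (⟨_, ⟨α, hα, rfl⟩, rfl⟩ | ⟨a, ha, rfl⟩) y
      (⟨_, ⟨β, hβ, rfl⟩, rfl⟩ | ⟨b, hb, rfl⟩)
    · rw [hbr_tt, Ecoroot α hα, Ecoroot β hβ, hbr_tt, map_zero]
    · rw [hbr_tX α b hα hb, Ecoroot α hα, map_smul, EX b hb,
        hbr_tX (w α) (wt b) (root_w α hα) (root_wt b hb), hwtpr, hwB]
    · rw [hbr_Xt β a hβ ha, Ecoroot β hβ, map_smul, EX a ha,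
        hbr_Xt (w β) (wt a) (root_w β hβ) (root_wt a ha), hwtpr, hwB]
    · -- the X-X case
      have ha' : B (pr (wt a)) (pr (wt a)) = 2 := root_wt a ha
      have hb' : B (pr (wt b)) (pr (wt b)) = 2 := root_wt b hb
      have hsum : pr (wt a) + pr (wt b) = w (pr a + pr b) := by
        rw [hwtpr, hwtpr, map_add]
      by_cases h0 : pr a + pr b = 0
      · obtain ⟨i, hi⟩ := (hker (a * b)).1 (by rw [hpr]; exact h0)
        have h0' : pr (wt a) + pr (wt b) = 0 := by rw [hsum, h0, map_zero]
        have hi' : wt a * wt b = z ^ i := by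
          rw [← map_mul, hi, map_zpow, hwtz]
        rw [hbr_XX₀ a b ha hb h0 i hi, map_smul, Ecoroot (pr a) ha, EX a ha, EX b hb,
          hbr_XX₀ (wt a) (wt b) ha' hb' h0' i hi', hwtpr, hwtpr, hεw]
      · by_cases h2 : B (pr a + pr b) (pr a + pr b) = 2
        · have hab : B (pr (a * b)) (pr (a * b)) = 2 := by rw [hpr]; exact h2
          have h2' : B (pr (wt a) + pr (wt b)) (pr (wt a) + pr (wt b)) = 2 := by
            rw [hsum, hwB]; exact h2
          rw [hbr_XXΦ a b ha hb h2, map_smul, EX (a * b) hab, EX a ha, EX b hb,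
            hbr_XXΦ (wt a) (wt b) ha' hb' h2', hwtpr, hwtpr, hεw, ← map_mul]
        · have h0' : pr (wt a) + pr (wt b) ≠ 0 := by
            rw [hsum]
            intro hc
            exact h0 (by simpa using (map_eq_zero_iff w (AddEquiv.injective w)).1 hc)
          have h2' : B (pr (wt a) + pr (wt b)) (pr (wt a) + pr (wt b)) ≠ 2 := by
            rw [hsum, hwB]; exact h2
          rw [hbr_XXo a b ha hb h0 h2, EX a ha, EX b hb,
            hbr_XXo (wt a) (wt b) ha' hb' h0' h2', map_zero]
  have Ebr : ∀ x y : H, E (br x y) = br (E x) (E y) := by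
    have key : ∀ x ∈ Sset, ∀ y : H, E (br x y) = br (E x) (E y) := by
      intro x hxS y
      have hy : y ∈ Submodule.span k Sset := by rw [hS]; trivial
      induction hy using Submodule.span_induction with
      | mem b hb => exact base x hxS b hb
      | zero => simp
      | add y1 y2 hy1 hy2 ih1 ih2 => simp only [map_add, ih1, ih2]
      | smul c y1 hy1 ih => simp only [map_smul, ih]
    intro x y
    have hx : x ∈ Submodule.span k Sset := by rw [hS]; trivial
    induction hx using Submodule.span_induction with
    | mem a haS => exact key a haS y
    | zero => simp
    | add x1 x2 hx1 hx2 ih1 ih2 =>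
      simp only [map_add, LinearMap.add_apply, ih1, ih2]
    | smul c x1 hx1 ih =>
      simp only [map_smul, LinearMap.smul_apply, ih]
  -- powers of E on generators
  have Epow_coroot : ∀ (n : ℕ) (α : Λ), B α α = 2 →
      (E ^ n) (tEmb (corootHom k B α)) = tEmb (corootHom k B ((n • w) α)) := by
    intro n
    induction n with
    | zero => intro α hα; simp
    | succ n ih =>
      intro α hα
      have h1 : (E ^ (n + 1)) (tEmb (corootHom k B α))
          = (E ^ n) (E (tEmb (corootHom k B α))) := by
        rw [pow_succ]; rfl
      have h3 : ((n + 1) • w) α = (n • w) (w α) := by rw [succ_nsmul]; rfl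
      rw [h1, Ecoroot α hα, ih (w α) (root_w α hα), h3]
  have root_wt_pow : ∀ (n : ℕ) (a : Lt), B (pr a) (pr a) = 2 →
      B (pr ((wt ^ n) a)) (pr ((wt ^ n) a)) = 2 := by
    intro n
    induction n with
    | zero => intro a ha; exact ha
    | succ n ih =>
      intro a ha
      have h1 : (wt ^ (n + 1)) a = (wt ^ n) (wt a) := by rw [pow_succ]; rfl
      rw [h1]
      exact ih (wt a) (root_wt a ha)
  have Epow_X : ∀ (n : ℕ) (a : Lt), B (pr a) (pr a) = 2 →
      (E ^ n) (X a) = X ((wt ^ n) a) := by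
    intro n
    induction n with
    | zero => intro a ha; simp
    | succ n ih =>
      intro a ha
      have h1 : (E ^ (n + 1)) (X a) = (E ^ n) (E (X a)) := by rw [pow_succ]; rfl
      have h3 : (wt ^ (n + 1)) a = (wt ^ n) (wt a) := by rw [pow_succ]; rfl
      rw [h1, EX a ha, ih (wt a) (root_wt a ha), h3]
  -- E has d-th power the identity
  have hEd : E ^ d = 1 := by
    apply LinearMap.ext_on hS
    rintro x (⟨_, ⟨α, hα, rfl⟩, rfl⟩ | ⟨a, ha, rfl⟩)
    · rw [Epow_coroot d α hα, hwd]
      rfl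
    · rw [Epow_X d a ha, hwtd]
      rfl
  -- package E as a linear equivalence
  have hd1 : d - 1 + 1 = d := Nat.succ_pred_eq_of_pos hd
  have h1 : E ∘ₗ E ^ (d - 1) = LinearMap.id := by
    rw [← Module.End.mul_eq_comp, ← pow_succ', hd1, hEd]
    rfl
  have h2 : (E ^ (d - 1)) ∘ₗ E = LinearMap.id := by
    rw [← Module.End.mul_eq_comp, ← pow_succ, hd1, hEd]
    rfl
  set e : H ≃ₗ[k] H := LinearEquiv.ofLinear E (E ^ (d - 1)) h1 h2 with he
  have heapp : ∀ x : H, e x = E x := fun _ => rfl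
  have hepow : ∀ (n : ℕ) (x : H), (e ^ n) x = (E ^ n) x := by
    intro n
    induction n with
    | zero => intro x; rfl
    | succ n ih =>
      intro x
      have ha : (e ^ (n + 1)) x = (e ^ n) (e x) := by rw [pow_succ]; rfl
      have hb : (E ^ (n + 1)) x = (E ^ n) (E x) := by rw [pow_succ]; rfl
      rw [ha, hb, heapp, ih]
  have hed : e ^ d = 1 := by
    apply DFunLike.ext
    intro x
    rw [hepow, hEd]
    rfl
  -- order of e
  have horder : orderOf e = d := by
    have hdvd : orderOf e ∣ d := orderOf_dvd_of_pow_eq_one hed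
    have hne : orderOf e ≠ 0 := by
      intro h0
      rw [h0] at hdvd
      exact hd.ne' (Nat.eq_zero_of_zero_dvd hdvd)
    rcases lt_or_eq_of_le (Nat.le_of_dvd hd hdvd) with hlt | heq
    · exfalso
      set m := orderOf e with hm
      have hmpos : 0 < m := Nat.pos_of_ne_zero hne
      have hwm : m • w ≠ 0 := by
        intro hwm1
        have hdm := addOrderOf_dvd_of_nsmul_eq_zero hwm1
        rw [hword] at hdm
        exact absurd (Nat.le_of_dvd hmpos hdm) (by omega)
      have hroot : ∃ α : Λ, B α α = 2 ∧ (m • w) α ≠ α := by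
        by_contra hall
        push_neg at hall
        apply hwm
        apply DFunLike.ext
        intro lam
        have hlam : lam ∈ AddSubgroup.closure {α : Λ | B α α = 2} := by
          rw [hBgen]; trivial
        have : (m • w) lam = lam := by
          induction hlam using AddSubgroup.closure_induction with
          | mem x hx => exact hall x hx
          | zero => exact map_zero _
          | add x y hx hy ihx ihy => rw [map_add, ihx, ihy]
          | neg x hx ih => rw [map_neg, ih]
        exact this
      obtain ⟨α, hα, hneq⟩ := hroot
      have hem : e ^ m = 1 := pow_orderOf_eq_one e
      have h1 : (e ^ m) (tEmb (corootHom k B α)) = tEmb (corootHom k B α) := by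
        rw [hem]; rfl
      rw [hepow, Epow_coroot m α hα] at h1
      exact hneq (cinj _ _ (htinj h1))
    · exact heq
  exact ⟨e, fun α hα => Ecoroot α hα, fun a ha => EX a ha, Ebr, horder⟩

end
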